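/- Let r: R^d → R be L-Lipschitz and let x_1,...,x_K, x'_1,...,x'_K ∈ R^d with ‖x_i‖, ‖x'_i‖ ≤ B. Define weights p_i = e^{r(x_i)}/Σ_j e^{r(x_j)} and p'_i analogously for the x'_i. Then ‖Σ_i p_i x_i − Σ_i p'_i x'_i‖ ≤ Σ_i p_i ‖x_i − x'_i‖ + (LB/2) Σ_i ‖x_i − x'_i‖, which is at most (1 + LB/2) Σ_i ‖x_i − x'_i‖. -/

import Mathlib

open Finset

noncomputable def sm {K : ℕ} (w : Fin K → ℝ) (i : Fin K) : ℝ :=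
  Real.exp (w i) / ∑ j, Real.exp (w j)

lemma sum_exp_pos {K : ℕ} (hK : 0 < K) (w : Fin K → ℝ) : 0 < ∑ j, Real.exp (w j) :=
  Finset.sum_pos (fun _ _ => Real.exp_pos _) ⟨⟨0, hK⟩, mem_univ _⟩

lemma sm_nonneg {K : ℕ} (w : Fin K → ℝ) (i : Fin K) : 0 ≤ sm w i :=
  div_nonneg (Real.exp_pos _).le (Finset.sum_nonneg fun _ _ => (Real.exp_pos _).le)

lemma sm_le_one {K : ℕ} (w : Fin K → ℝ) (i : Fin K) : sm w i ≤ 1 := by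
  have hK : 0 < K := i.pos
  exact (div_le_one (sum_exp_pos hK w)).2
    (Finset.single_le_sum (fun j _ => (Real.exp_pos (w j)).le) (mem_univ i))

lemma sum_sm {K : ℕ} (hK : 0 < K) (w : Fin K → ℝ) : ∑ i, sm w i = 1 := by
  simp only [sm, ← Finset.sum_div]
  exact div_self (sum_exp_pos hK w).ne'

lemma exp_sub_exp_bound (u v : ℝ) :
    |Real.exp u - Real.exp v| ≤ Real.exp ((u + v) / 2) * (|u - v| * Real.exp (|u - v| / 2)) := by
  wlog h : v ≤ u generalizing u v
  · rw [abs_sub_comm, abs_sub_comm u v]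
    have h2 := this v u (le_of_not_ge h)
    have : (v + u) / 2 = (u + v) / 2 := by ring
    rwa [this] at h2
  have hc : 0 ≤ u - v := by linarith
  rw [abs_of_nonneg hc, abs_of_nonneg (sub_nonneg.2 (Real.exp_le_exp.2 h))]
  have h1 : 1 - (u - v) ≤ Real.exp (-(u - v)) := by
    have := Real.add_one_le_exp (-(u - v)); linarith
  have e1 : Real.exp u = Real.exp ((u + v) / 2) * Real.exp ((u - v) / 2) := by
    rw [← Real.exp_add]; ring_nf
  have e2 : Real.exp v = Real.exp ((u + v) / 2) * Real.exp ((u - v) / 2) * Real.exp (-(u - v)) := by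
    rw [← Real.exp_add, ← Real.exp_add]; ring_nf
  rw [e1, e2]
  have hm := (Real.exp_pos ((u + v) / 2)).le
  have hh := (Real.exp_pos ((u - v) / 2)).le
  nlinarith [mul_nonneg hm hh]

/-- auxiliary off-diagonal sum bound -/
lemma offdiag_bound {K : ℕ} (hK : 0 < K) (p : Fin K → ℝ) (δ : Fin K → ℝ)
    (hp0 : ∀ i, 0 ≤ p i) (hp1 : ∀ i, p i ≤ 1) (hps : ∑ i, p i = 1)
    (hδ : ∀ i, 0 ≤ δ i) :
    ∑ i, ∑ j ∈ Finset.univ.erase i, p i * p j * (δ i + δ j) ≤ (∑ i, δ i) / 2 := by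
  have hrow : ∀ i : Fin K, ∑ j ∈ Finset.univ.erase i, p i * p j * (δ i + δ j)
      = p i * (1 - p i) * δ i + p i * ((∑ j, p j * δ j) - p i * δ i) := by
    intro i
    have h1 : ∑ j ∈ Finset.univ.erase i, p j = 1 - p i := by
      rw [Finset.sum_erase_eq_sub (mem_univ i), hps]
    have h2 : ∑ j ∈ Finset.univ.erase i, p j * δ j = (∑ j, p j * δ j) - p i * δ i := by
      rw [Finset.sum_erase_eq_sub (mem_univ i)]
    calc ∑ j ∈ Finset.univ.erase i, p i * p j * (δ i + δ j)
        = ∑ j ∈ Finset.univ.erase i, (p i * δ i * p j + p i * (p j * δ j)) := by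
          refine Finset.sum_congr rfl fun j _ => by ring
      _ = p i * δ i * ∑ j ∈ Finset.univ.erase i, p j
            + p i * ∑ j ∈ Finset.univ.erase i, p j * δ j := by
          rw [Finset.sum_add_distrib, ← Finset.mul_sum, ← Finset.mul_sum]
      _ = _ := by rw [h1, h2]; ring
  calc ∑ i, ∑ j ∈ Finset.univ.erase i, p i * p j * (δ i + δ j)
      = ∑ i, (p i * (1 - p i) * δ i + p i * ((∑ j, p j * δ j) - p i * δ i)) := by
        exact Finset.sum_congr rfl fun i _ => hrow i
    _ = (∑ i, p i * (1 - p i) * δ i) + ∑ i, p i * ((∑ j, p j * δ j) - p i * δ i) := by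
        rw [Finset.sum_add_distrib]
    _ = (∑ i, p i * (1 - p i) * δ i) + ∑ i, (p i * δ i - p i * (p i * δ i)) := by
        congr 1
        simp only [mul_sub]
        rw [Finset.sum_sub_distrib, Finset.sum_sub_distrib, ← Finset.sum_mul, hps, one_mul]
    _ = ∑ i, (p i * (1 - p i) * δ i + (p i * δ i - p i * (p i * δ i))) := by
        rw [Finset.sum_add_distrib]
    _ ≤ ∑ i, δ i / 2 := by
        refine Finset.sum_le_sum fun i _ => ?_
        nlinarith [sq_nonneg (p i - 1/2), hδ i, hp0 i, hp1 i]
    _ = (∑ i, δ i) / 2 := by rw [Finset.sum_div]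

lemma sm_step {K : ℕ} (w v : Fin K → ℝ) :
    ∑ i, |sm w i - sm v i| ≤
      Real.exp (∑ i, |w i - v i|) * (∑ i, |w i - v i|) / 2 := by
  rcases Nat.eq_zero_or_pos K with hK | hK
  · subst hK; simp
  set S := ∑ j, Real.exp (w j) with hS
  set T := ∑ j, Real.exp (v j) with hT
  have hSpos : 0 < S := sum_exp_pos hK w
  have hTpos : 0 < T := sum_exp_pos hK v
  set D := ∑ i, |w i - v i| with hD
  have hDnn : 0 ≤ D := Finset.sum_nonneg fun _ _ => abs_nonneg _
  have habs : ∀ i, |w i - v i| ≤ D := fun i => by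
    rw [hD]
    exact Finset.single_le_sum (f := fun j => |w j - v j|) (fun j _ => abs_nonneg _) (mem_univ i)
  have hident : ∀ i, sm w i - sm v i
      = (∑ j, (Real.exp (w i) * Real.exp (v j) - Real.exp (w j) * Real.exp (v i))) / (S * T) := by
    intro i
    rw [Finset.sum_sub_distrib, ← Finset.mul_sum, ← Finset.sum_mul]
    simp only [sm, ← hS, ← hT]
    field_simp
  have hpair : ∀ i j : Fin K,
      |Real.exp (w i) * Real.exp (v j) - Real.exp (w j) * Real.exp (v i)| / (S * T)
      ≤ Real.exp D * ((sm w i * sm w j + sm v i * sm v j) / 2 * (|w i - v i| + |w j - v j|)) := by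
    intro i j
    have hc : |(w i + v j) - (w j + v i)| ≤ |w i - v i| + |w j - v j| := by
      have h := abs_add_le (w i - v i) (-(w j - v j))
      simp only [abs_neg] at h
      calc |(w i + v j) - (w j + v i)| = |(w i - v i) + -(w j - v j)| := by ring_nf
        _ ≤ _ := h
    have hcD : |(w i + v j) - (w j + v i)| / 2 ≤ D := by
      have := habs i; have := habs j; linarith
    have hE := exp_sub_exp_bound (w i + v j) (w j + v i)
    rw [Real.exp_add, Real.exp_add] at hE
    have hm : Real.exp ((w i + v j + (w j + v i)) / 2) / (S * T)
        ≤ (sm w i * sm w j + sm v i * sm v j) / 2 := by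
      set a := Real.exp ((w i + w j) / 2) / S with ha
      set b := Real.exp ((v i + v j) / 2) / T with hb
      have h1 : Real.exp ((w i + v j + (w j + v i)) / 2) / (S * T) = a * b := by
        rw [ha, hb, div_mul_div_comm, ← Real.exp_add]
        ring_nf
      have h2 : a ^ 2 = sm w i * sm w j := by
        rw [ha, div_pow, sm, sm, ← hS, div_mul_div_comm, ← Real.exp_add, ← Real.exp_nat_mul]
        ring_nf
      have h3 : b ^ 2 = sm v i * sm v j := by
        rw [hb, div_pow, sm, sm, ← hT, div_mul_div_comm, ← Real.exp_add, ← Real.exp_nat_mul]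
        ring_nf
      rw [h1, ← h2, ← h3]
      nlinarith [sq_nonneg (a - b)]
    calc |Real.exp (w i) * Real.exp (v j) - Real.exp (w j) * Real.exp (v i)| / (S * T)
        ≤ (Real.exp ((w i + v j + (w j + v i)) / 2)
            * (|(w i + v j) - (w j + v i)| * Real.exp (|(w i + v j) - (w j + v i)| / 2))) / (S * T) := by
          gcongr
      _ = (Real.exp ((w i + v j + (w j + v i)) / 2) / (S * T))
            * |(w i + v j) - (w j + v i)| * Real.exp (|(w i + v j) - (w j + v i)| / 2) := by ring
      _ ≤ ((sm w i * sm w j + sm v i * sm v j) / 2)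
            * (|w i - v i| + |w j - v j|) * Real.exp D := by
          have hq : 0 ≤ (sm w i * sm w j + sm v i * sm v j) / 2 :=
            div_nonneg (add_nonneg (mul_nonneg (sm_nonneg w i) (sm_nonneg w j))
              (mul_nonneg (sm_nonneg v i) (sm_nonneg v j))) (by norm_num)
          exact mul_le_mul (mul_le_mul hm hc (abs_nonneg _) hq)
            (Real.exp_le_exp.2 hcD) (Real.exp_pos _).le
            (mul_nonneg hq (add_nonneg (abs_nonneg _) (abs_nonneg _)))
      _ = Real.exp D * ((sm w i * sm w j + sm v i * sm v j) / 2 * (|w i - v i| + |w j - v j|)) := by ring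
  have off1 := offdiag_bound hK (sm w) (fun i => |w i - v i|) (sm_nonneg w) (sm_le_one w)
    (sum_sm hK w) (fun i => abs_nonneg _)
  have off2 := offdiag_bound hK (sm v) (fun i => |w i - v i|) (sm_nonneg v) (sm_le_one v)
    (sum_sm hK v) (fun i => abs_nonneg _)
  calc ∑ i, |sm w i - sm v i|
      ≤ ∑ i, ∑ j ∈ Finset.univ.erase i,
          |Real.exp (w i) * Real.exp (v j) - Real.exp (w j) * Real.exp (v i)| / (S * T) := by
        refine Finset.sum_le_sum fun i _ => ?_
        rw [hident i, ← Finset.sum_erase (s := Finset.univ)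
          (f := fun j => Real.exp (w i) * Real.exp (v j) - Real.exp (w j) * Real.exp (v i))
          (a := i) (sub_self _), abs_div,
          abs_of_pos (mul_pos hSpos hTpos), ← Finset.sum_div]
        exact (div_le_div_iff_of_pos_right (mul_pos hSpos hTpos)).2
          (Finset.abs_sum_le_sum_abs _ _)
    _ ≤ ∑ i, ∑ j ∈ Finset.univ.erase i, Real.exp D
          * ((sm w i * sm w j + sm v i * sm v j) / 2 * (|w i - v i| + |w j - v j|)) := by
        exact Finset.sum_le_sum fun i _ => Finset.sum_le_sum fun j _ => hpair i j
    _ = Real.exp D / 2 * ((∑ i, ∑ j ∈ Finset.univ.erase i,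
            sm w i * sm w j * (|w i - v i| + |w j - v j|))
          + ∑ i, ∑ j ∈ Finset.univ.erase i,
            sm v i * sm v j * (|w i - v i| + |w j - v j|)) := by
        rw [mul_add]
        simp only [Finset.mul_sum, ← Finset.sum_add_distrib]
        exact Finset.sum_congr rfl fun i _ => Finset.sum_congr rfl fun j _ => by ring
    _ ≤ Real.exp D / 2 * (D / 2 + D / 2) := by
        exact mul_le_mul_of_nonneg_left (add_le_add off1 off2) (by positivity)
    _ = Real.exp D * D / 2 := by ring

lemma softmax_l1 {K : ℕ} (w v : Fin K → ℝ) :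
    ∑ i, |sm w i - sm v i| ≤ (∑ i, |w i - v i|) / 2 := by
  set D := ∑ i, |w i - v i| with hD
  have hDnn : 0 ≤ D := Finset.sum_nonneg fun _ _ => abs_nonneg _
  have key : ∀ n : ℕ, ∑ i, |sm w i - sm v i| ≤ Real.exp (D / ((n : ℝ) + 1)) * D / 2 := by
    intro n
    have hn : ((n : ℝ) + 1) ≠ 0 := by positivity
    set a : ℕ → Fin K → ℝ := fun k i => v i + (k : ℝ) / ((n : ℝ) + 1) * (w i - v i) with ha
    have ha0 : a 0 = v := by funext i; simp [ha]
    have han : a (n + 1) = w := by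
      funext i; simp only [ha]; push_cast; field_simp; ring
    have hstep : ∀ k : ℕ, ∑ i, |a (k + 1) i - a k i| = D / ((n : ℝ) + 1) := by
      intro k
      have hpt : ∀ i : Fin K, a (k + 1) i - a k i = (w i - v i) / ((n : ℝ) + 1) := by
        intro i; simp only [ha]; push_cast; field_simp; ring
      rw [hD, Finset.sum_div]
      refine Finset.sum_congr rfl fun i _ => ?_
      rw [hpt i, abs_div, abs_of_pos (by positivity : (0 : ℝ) < (n : ℝ) + 1)]
    calc ∑ i, |sm w i - sm v i|
        = ∑ i, |∑ k ∈ Finset.range (n + 1), (sm (a (k + 1)) i - sm (a k) i)| := by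
          refine Finset.sum_congr rfl fun i _ => ?_
          rw [Finset.sum_range_sub (fun k => sm (a k) i), ha0, han]
      _ ≤ ∑ i, ∑ k ∈ Finset.range (n + 1), |sm (a (k + 1)) i - sm (a k) i| :=
          Finset.sum_le_sum fun i _ => Finset.abs_sum_le_sum_abs _ _
      _ = ∑ k ∈ Finset.range (n + 1), ∑ i, |sm (a (k + 1)) i - sm (a k) i| := Finset.sum_comm
      _ ≤ ∑ _k ∈ Finset.range (n + 1),
            Real.exp (D / ((n : ℝ) + 1)) * (D / ((n : ℝ) + 1)) / 2 := by
          refine Finset.sum_le_sum fun k _ => ?_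
          have h := sm_step (a (k + 1)) (a k)
          rwa [hstep k] at h
      _ = Real.exp (D / ((n : ℝ) + 1)) * D / 2 := by
          rw [Finset.sum_const, Finset.card_range, nsmul_eq_mul]
          push_cast
          field_simp
  have h1 : Filter.Tendsto (fun n : ℕ => D / ((n : ℝ) + 1)) Filter.atTop (nhds 0) :=
    Filter.Tendsto.div_atTop tendsto_const_nhds
      (Filter.tendsto_atTop_add_const_right _ 1 tendsto_natCast_atTop_atTop)
  have h2 : Filter.Tendsto (fun n : ℕ => Real.exp (D / ((n : ℝ) + 1)) * D / 2)
      Filter.atTop (nhds (D / 2)) := by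
    have h3 := (Real.continuous_exp.tendsto 0).comp h1
    rw [Real.exp_zero] at h3
    have h4 := (h3.mul_const D).div_const 2
    simpa using h4
  exact ge_of_tendsto' h2 key


/-- Bound on the difference of Bradley–Terry (softmax-of-reward) weighted
averages of bounded points under an `L`-Lipschitz reward. -/
theorem bt_weighted_average_bound
    {K d : ℕ} (r : EuclideanSpace ℝ (Fin d) → ℝ) (L B : ℝ)
    (hL : 0 ≤ L) (hB : 0 ≤ B)
    (hr : ∀ u v, |r u - r v| ≤ L * ‖u - v‖)
    (x x' : Fin K → EuclideanSpace ℝ (Fin d))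
    (hx : ∀ i, ‖x i‖ ≤ B) (hx' : ∀ i, ‖x' i‖ ≤ B)
    (p p' : Fin K → ℝ)
    (hp : ∀ i, p i = Real.exp (r (x i)) / ∑ j, Real.exp (r (x j)))
    (hp' : ∀ i, p' i = Real.exp (r (x' i)) / ∑ j, Real.exp (r (x' j))) :
    ‖(∑ i, p i • x i) - ∑ i, p' i • x' i‖ ≤
        (∑ i, p i * ‖x i - x' i‖) + (L * B / 2) * ∑ i, ‖x i - x' i‖ ∧
      (∑ i, p i * ‖x i - x' i‖) + (L * B / 2) * ∑ i, ‖x i - x' i‖ ≤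
        (1 + L * B / 2) * ∑ i, ‖x i - x' i‖ := by
  have hpsm : ∀ i, p i = sm (fun j => r (x j)) i := fun i => hp i
  have hp'sm : ∀ i, p' i = sm (fun j => r (x' j)) i := fun i => hp' i
  have hp0 : ∀ i, 0 ≤ p i := fun i => (hpsm i) ▸ sm_nonneg _ i
  have hp1 : ∀ i, p i ≤ 1 := fun i => (hpsm i) ▸ sm_le_one _ i
  have hSn : 0 ≤ ∑ i, ‖x i - x' i‖ := Finset.sum_nonneg fun _ _ => norm_nonneg _
  -- ℓ1 bound on weights
  have hl1 : ∑ i, |p i - p' i| ≤ (L / 2) * ∑ i, ‖x i - x' i‖ := by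
    calc ∑ i, |p i - p' i|
        = ∑ i, |sm (fun j => r (x j)) i - sm (fun j => r (x' j)) i| := by
          exact Finset.sum_congr rfl fun i _ => by rw [hpsm i, hp'sm i]
      _ ≤ (∑ i, |r (x i) - r (x' i)|) / 2 := softmax_l1 _ _
      _ ≤ (∑ i, L * ‖x i - x' i‖) / 2 := by
          gcongr with i hi
          exact hr (x i) (x' i)
      _ = (L / 2) * ∑ i, ‖x i - x' i‖ := by rw [← Finset.mul_sum]; ring
  constructor
  · have hdecomp : (∑ i, p i • x i) - ∑ i, p' i • x' i
        = (∑ i, p i • (x i - x' i)) + ∑ i, (p i - p' i) • x' i := by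
      rw [← Finset.sum_add_distrib, ← Finset.sum_sub_distrib]
      refine Finset.sum_congr rfl fun i _ => ?_
      rw [smul_sub, sub_smul]
      abel
    rw [hdecomp]
    have hA : ‖∑ i, p i • (x i - x' i)‖ ≤ ∑ i, p i * ‖x i - x' i‖ := by
      refine (norm_sum_le _ _).trans (Finset.sum_le_sum fun i _ => ?_)
      rw [norm_smul, Real.norm_eq_abs, abs_of_nonneg (hp0 i)]
    have hB2 : ‖∑ i, (p i - p' i) • x' i‖ ≤ (L * B / 2) * ∑ i, ‖x i - x' i‖ := by
      calc ‖∑ i, (p i - p' i) • x' i‖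
          ≤ ∑ i, |p i - p' i| * ‖x' i‖ := by
            refine (norm_sum_le _ _).trans (Finset.sum_le_sum fun i _ => ?_)
            rw [norm_smul, Real.norm_eq_abs]
        _ ≤ ∑ i, |p i - p' i| * B :=
            Finset.sum_le_sum fun i _ => mul_le_mul_of_nonneg_left (hx' i) (abs_nonneg _)
        _ = B * ∑ i, |p i - p' i| := by rw [← Finset.sum_mul]; ring
        _ ≤ B * ((L / 2) * ∑ i, ‖x i - x' i‖) := mul_le_mul_of_nonneg_left hl1 hB
        _ = (L * B / 2) * ∑ i, ‖x i - x' i‖ := by ring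
    calc ‖(∑ i, p i • (x i - x' i)) + ∑ i, (p i - p' i) • x' i‖
        ≤ ‖∑ i, p i • (x i - x' i)‖ + ‖∑ i, (p i - p' i) • x' i‖ := norm_add_le _ _
      _ ≤ (∑ i, p i * ‖x i - x' i‖) + (L * B / 2) * ∑ i, ‖x i - x' i‖ := add_le_add hA hB2
  · have h1 : ∑ i, p i * ‖x i - x' i‖ ≤ ∑ i, ‖x i - x' i‖ := by
      refine Finset.sum_le_sum fun i _ => ?_
      nlinarith [norm_nonneg (x i - x' i), hp0 i, hp1 i]
    nlinarith [mul_nonneg (mul_nonneg hL hB) hSn]
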